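/- For the longest permutation w₀ of S_n, whose Rothe diagram is the staircase with left-justified rows of lengths 1, 2, ..., n−1 from top to bottom, every cell has equally many cells above it in its column as to its right in its row; consequently, the map sending each entry i to binom(n,2) − i + 1 is an involution on the set of standard balanced tableaux on this diagram. -/

import Mathlib

/-- The Coxeter length of `w`: the number of inversion pairs. -/
def invCount {n : ℕ} (w : Equiv.Perm (Fin n)) : ℕ :=
  (Finset.univ.filter fun p : Fin n × Fin n => p.1 < p.2 ∧ w p.2 < w p.1).card

/-- The Rothe diagram of `w` (0-indexed): the cells `(i, w j)` for inversions `i < j`,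
`w j < w i`, as a subset of `ℕ × ℕ` (first coordinate the row, drawn with row `0` at the
bottom so that "above" means larger first coordinate; second coordinate the column). -/
def RotheD (n : ℕ) (w : Equiv.Perm (Fin n)) : Finset (ℕ × ℕ) :=
  (Finset.univ.filter fun p : Fin n × Fin n => p.1 < p.2 ∧ w p.2 < w p.1).image
    fun p => ((p.1 : ℕ), (w p.2 : ℕ))

/-- A standard balanced tableau on a diagram `D`: a bijective filling of the cells of `D`
by `1, …, |D|` such that for every cell, the number of larger entries to its right in its
row equals the number of smaller entries above it in its column. -/
def IsSBT (D : Finset (ℕ × ℕ)) (T : ℕ × ℕ → ℕ) : Prop :=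
  Set.InjOn T ↑D ∧ D.image T = Finset.Icc 1 D.card ∧
  ∀ x ∈ D, (D.filter fun y => y.1 = x.1 ∧ x.2 < y.2 ∧ T x < T y).card
    = (D.filter fun y => y.2 = x.2 ∧ x.1 < y.1 ∧ T y < T x).card

lemma memD (n : ℕ) (p : ℕ × ℕ) :
    p ∈ RotheD n (Fin.revPerm : Equiv.Perm (Fin n)) ↔ p.1 + p.2 + 2 ≤ n := by
  obtain ⟨a, b⟩ := p
  simp only [RotheD, Finset.mem_image, Finset.mem_filter, Finset.mem_univ, true_and]
  constructor
  · rintro ⟨⟨i, j⟩, ⟨hij, -⟩, h⟩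
    have hi := i.isLt; have hj := j.isLt
    have hij2 : (i : ℕ) < (j : ℕ) := hij
    simp only [Fin.revPerm_apply, Fin.val_rev, Prod.mk.injEq] at h
    omega
  · intro h
    refine ⟨(⟨a, by omega⟩, ⟨n - 1 - b, by omega⟩), ⟨?_, ?_⟩, ?_⟩
    · show a < n - 1 - b; omega
    · show Fin.rev _ < Fin.rev _
      rw [Fin.rev_lt_rev]
      show a < n - 1 - b; omega
    · simp only [Fin.revPerm_apply, Fin.val_rev, Prod.mk.injEq]
      exact ⟨trivial, by omega⟩

lemma gauss (m : ℕ) : ∑ i ∈ Finset.range m, (m - i) = (m + 1).choose 2 := by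
  induction m with
  | zero => simp
  | succ k ih =>
    rw [Finset.sum_range_succ]
    have h1 : ∑ i ∈ Finset.range k, (k + 1 - i) = (∑ i ∈ Finset.range k, (k - i)) + k := by
      have e : ∀ i ∈ Finset.range k, k + 1 - i = (k - i) + 1 := fun i hi => by
        have := Finset.mem_range.mp hi; omega
      rw [Finset.sum_congr rfl e, Finset.sum_add_distrib, Finset.sum_const,
        Finset.card_range, smul_eq_mul, mul_one]
    have h2 : (k + 1 + 1).choose 2 = (k + 1).choose 2 + (k + 1) := by
      have h := Nat.choose_succ_succ (k + 1) 1
      norm_num [Nat.choose_one_right] at h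
      omega
    rw [h1, ih]
    omega

lemma cardD (n : ℕ) :
    (RotheD n (Fin.revPerm : Equiv.Perm (Fin n))).card = n.choose 2 := by
  have hD : RotheD n (Fin.revPerm : Equiv.Perm (Fin n))
      = (Finset.range (n - 1)).biUnion
        (fun i => (Finset.range (n - 1 - i)).image fun c => (i, c)) := by
    ext ⟨a, b⟩
    simp only [memD, Finset.mem_biUnion, Finset.mem_range, Finset.mem_image,
      Prod.mk.injEq]
    constructor
    · intro h
      exact ⟨a, by omega, b, by omega, rfl, rfl⟩
    · rintro ⟨i, hi, c, hc, rfl, rfl⟩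
      omega
  rw [hD, Finset.card_biUnion]
  · have : ∀ i ∈ Finset.range (n - 1),
        ((Finset.range (n - 1 - i)).image fun c => (i, c)).card = n - 1 - i := by
      intro i _
      rw [Finset.card_image_of_injective _ (fun a b h => (Prod.mk.injEq _ _ _ _ ▸ h).2),
        Finset.card_range]
    rw [Finset.sum_congr rfl this]
    rcases n with _ | m
    · simp
    · simpa using gauss m
  · intro i _ j _ hij
    simp only [Finset.disjoint_left, Finset.mem_image, Finset.mem_range]
    rintro ⟨a, b⟩ ⟨c, hc, h⟩ ⟨d, hd, h'⟩
    rw [Prod.mk.injEq] at h h'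
    exact hij (h.1 ▸ h'.1 ▸ rfl)

lemma rowcard (n : ℕ) (x : ℕ × ℕ) (hx : x ∈ RotheD n (Fin.revPerm : Equiv.Perm (Fin n))) :
    ((RotheD n (Fin.revPerm : Equiv.Perm (Fin n))).filter
      fun y => y.1 = x.1 ∧ x.2 < y.2).card = n - 2 - x.1 - x.2 := by
  rw [memD] at hx
  have h : (RotheD n (Fin.revPerm : Equiv.Perm (Fin n))).filter
      (fun y => y.1 = x.1 ∧ x.2 < y.2)
      = (Finset.Ico (x.2 + 1) (n - 1 - x.1)).image fun c => (x.1, c) := by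
    ext ⟨a, b⟩
    simp only [Finset.mem_filter, memD, Finset.mem_image, Finset.mem_Ico, Prod.mk.injEq]
    constructor
    · rintro ⟨h1, rfl, h3⟩
      exact ⟨b, ⟨by omega, by omega⟩, rfl, rfl⟩
    · rintro ⟨c, hc, rfl, rfl⟩
      exact ⟨by omega, rfl, by omega⟩
  rw [h, Finset.card_image_of_injective _ (fun a b h => (Prod.mk.injEq _ _ _ _ ▸ h).2),
    Nat.card_Ico]
  omega

lemma colcard (n : ℕ) (x : ℕ × ℕ) (hx : x ∈ RotheD n (Fin.revPerm : Equiv.Perm (Fin n))) :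
    ((RotheD n (Fin.revPerm : Equiv.Perm (Fin n))).filter
      fun y => y.2 = x.2 ∧ x.1 < y.1).card = n - 2 - x.1 - x.2 := by
  rw [memD] at hx
  have h : (RotheD n (Fin.revPerm : Equiv.Perm (Fin n))).filter
      (fun y => y.2 = x.2 ∧ x.1 < y.1)
      = (Finset.Ico (x.1 + 1) (n - 1 - x.2)).image fun r => (r, x.2) := by
    ext ⟨a, b⟩
    simp only [Finset.mem_filter, memD, Finset.mem_image, Finset.mem_Ico, Prod.mk.injEq]
    constructor
    · rintro ⟨h1, rfl, h3⟩
      exact ⟨a, ⟨by omega, by omega⟩, rfl, rfl⟩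
    · rintro ⟨c, hc, rfl, rfl⟩
      exact ⟨by omega, rfl, by omega⟩
  rw [h, Finset.card_image_of_injective _ (fun a b h => (Prod.mk.injEq _ _ _ _ ▸ h).1),
    Nat.card_Ico]
  omega

lemma split_card (D : Finset (ℕ × ℕ)) (T : ℕ × ℕ → ℕ) (hinj : Set.InjOn T ↑D)
    (x : ℕ × ℕ) (hx : x ∈ D) (P : ℕ × ℕ → Prop) [DecidablePred P]
    (hP : ∀ y, P y → y ≠ x) :
    (D.filter fun y => P y ∧ T y < T x).card + (D.filter fun y => P y ∧ T x < T y).card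
      = (D.filter P).card := by
  rw [← Finset.card_union_of_disjoint]
  · congr 1
    ext y
    simp only [Finset.mem_union, Finset.mem_filter]
    constructor
    · rintro (⟨hy, hPy, -⟩ | ⟨hy, hPy, -⟩) <;> exact ⟨hy, hPy⟩
    · rintro ⟨hy, hPy⟩
      have hne : T y ≠ T x := fun h => hP y hPy (hinj hy hx h)
      rcases lt_or_gt_of_ne hne with h | h
      · exact Or.inl ⟨hy, hPy, h⟩
      · exact Or.inr ⟨hy, hPy, h⟩
  · rw [Finset.disjoint_left]
    rintro y hy hy'
    simp only [Finset.mem_filter] at hy hy'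
    omega

/-- For the longest permutation `w₀` of `S_n` (here `Fin.revPerm`), whose Rothe diagram
is the staircase, every cell has as many cells above it in its column as to its right in
its row; consequently the map sending each entry `i` to `C(n,2) - i + 1` sends standard
balanced tableaux to standard balanced tableaux and is an involution on them. -/
theorem staircase_complement_involution (n : ℕ) :
    (∀ x ∈ RotheD n (Fin.revPerm : Equiv.Perm (Fin n)),
      ((RotheD n (Fin.revPerm : Equiv.Perm (Fin n))).filter
          fun y => y.2 = x.2 ∧ x.1 < y.1).card
        = ((RotheD n (Fin.revPerm : Equiv.Perm (Fin n))).filter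
          fun y => y.1 = x.1 ∧ x.2 < y.2).card) ∧
    (∀ T : ℕ × ℕ → ℕ, IsSBT (RotheD n (Fin.revPerm : Equiv.Perm (Fin n))) T →
      IsSBT (RotheD n (Fin.revPerm : Equiv.Perm (Fin n)))
        (fun z => n.choose 2 + 1 - T z)) ∧
    (∀ T : ℕ × ℕ → ℕ, IsSBT (RotheD n (Fin.revPerm : Equiv.Perm (Fin n))) T →
      ∀ x ∈ RotheD n (Fin.revPerm : Equiv.Perm (Fin n)),
        n.choose 2 + 1 - (n.choose 2 + 1 - T x) = T x) := by
  set D := RotheD n (Fin.revPerm : Equiv.Perm (Fin n)) with hDdef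
  set K := n.choose 2 with hK
  have hcard : D.card = K := cardD n
  have hval : ∀ T : ℕ × ℕ → ℕ, IsSBT D T → ∀ x ∈ D, 1 ≤ T x ∧ T x ≤ K := by
    intro T hT x hx
    have : T x ∈ Finset.Icc 1 D.card := hT.2.1 ▸ Finset.mem_image_of_mem T hx
    rw [Finset.mem_Icc] at this
    omega
  refine ⟨fun x hx => by rw [colcard n x hx, rowcard n x hx], ?_, ?_⟩
  · intro T hT
    obtain ⟨hinj, himg, hbal⟩ := hT
    have hb := hval T ⟨hinj, himg, hbal⟩
    refine ⟨?_, ?_, ?_⟩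
    · intro a ha b hb' h
      have h1 := hb a ha
      have h2 := hb b hb'
      simp only at h
      exact hinj ha hb' (by omega)
    · have : D.image (fun z => K + 1 - T z) = (D.image T).image (fun t => K + 1 - t) :=
        (Finset.image_image).symm
      rw [this, himg, hcard]
      ext t
      simp only [Finset.mem_image, Finset.mem_Icc]
      constructor
      · rintro ⟨s, hs, rfl⟩; omega
      · intro ht; exact ⟨K + 1 - t, by omega, by omega⟩
    · intro x hx
      have hbx := hb x hx
      have e1 : D.filter (fun y => y.1 = x.1 ∧ x.2 < y.2 ∧
            (fun z => K + 1 - T z) x < (fun z => K + 1 - T z) y)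
          = D.filter (fun y => (y.1 = x.1 ∧ x.2 < y.2) ∧ T y < T x) := by
        refine Finset.filter_congr fun y hy => ?_
        have hby := hb y hy
        simp only
        constructor
        · rintro ⟨h1, h2, h3⟩; exact ⟨⟨h1, h2⟩, by omega⟩
        · rintro ⟨⟨h1, h2⟩, h3⟩; exact ⟨h1, h2, by omega⟩
      have e2 : D.filter (fun y => y.2 = x.2 ∧ x.1 < y.1 ∧
            (fun z => K + 1 - T z) y < (fun z => K + 1 - T z) x)
          = D.filter (fun y => (y.2 = x.2 ∧ x.1 < y.1) ∧ T x < T y) := by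
        refine Finset.filter_congr fun y hy => ?_
        have hby := hb y hy
        simp only
        constructor
        · rintro ⟨h1, h2, h3⟩; exact ⟨⟨h1, h2⟩, by omega⟩
        · rintro ⟨⟨h1, h2⟩, h3⟩; exact ⟨h1, h2, by omega⟩
      have e3 : D.filter (fun y => y.1 = x.1 ∧ x.2 < y.2 ∧ T x < T y)
          = D.filter (fun y => (y.1 = x.1 ∧ x.2 < y.2) ∧ T x < T y) :=
        Finset.filter_congr fun y _ => by tauto
      have e4 : D.filter (fun y => y.2 = x.2 ∧ x.1 < y.1 ∧ T y < T x)
          = D.filter (fun y => (y.2 = x.2 ∧ x.1 < y.1) ∧ T y < T x) :=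
        Finset.filter_congr fun y _ => by tauto
      have hrow := split_card D T hinj x hx (fun y => y.1 = x.1 ∧ x.2 < y.2)
        (fun y hy h => by rw [h] at hy; exact lt_irrefl _ hy.2)
      have hcol := split_card D T hinj x hx (fun y => y.2 = x.2 ∧ x.1 < y.1)
        (fun y hy h => by rw [h] at hy; exact lt_irrefl _ hy.2)
      have htot : (D.filter (fun y => y.1 = x.1 ∧ x.2 < y.2)).card
          = (D.filter (fun y => y.2 = x.2 ∧ x.1 < y.1)).card := by
        rw [colcard n x hx, rowcard n x hx]
      have hbalx := hbal x hx
      rw [e3, e4] at hbalx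
      rw [e1, e2]
      omega
  · intro T hT x hx
    have := hval T hT x hx
    omega
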